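/- Let M, N ∈ ℂ^{n×n} and suppose β₀ ∈ ℂ is a simple root of χ(β) := det(M − βN), i.e. χ(β₀) = 0 and χ′(β₀) ≠ 0. If x ∈ ℂ^n is nonzero with (M − β₀N)x = 0 and y ∈ ℂ^n is nonzero with yᵀ(M − β₀N) = 0, then yᵀN x ≠ 0. -/

import Mathlib

open Matrix Polynomial

private lemma derivFinsetProd {ι : Type*} [DecidableEq ι] (s : Finset ι) (f : ι → ℂ[X]) :
    derivative (∏ i ∈ s, f i) = ∑ i ∈ s, (∏ j ∈ s.erase i, f j) * derivative (f i) := by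
  classical
  induction s using Finset.induction_on with
  | empty => simp
  | insert a s ha ih =>
    rw [Finset.prod_insert ha, derivative_mul, ih, Finset.sum_insert ha, Finset.erase_insert ha,
      Finset.mul_sum]
    congr 1
    · ring
    · refine Finset.sum_congr rfl fun i hi => ?_
      rw [Finset.erase_insert_of_ne]
      · rw [Finset.prod_insert (fun h => ha (Finset.mem_of_mem_erase h))]
        ring
      · rintro rfl; exact ha hi

private lemma derivDet {m : ℕ} (P : Matrix (Fin m) (Fin m) ℂ[X]) :
    derivative P.det = ∑ i, (P.updateCol i (fun r => derivative (P r i))).det := by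
  classical
  rw [det_apply', map_sum]
  simp only [derivative_mul, derivative_intCast, zero_mul, zero_add, derivFinsetProd]
  simp only [Finset.mul_sum]
  rw [Finset.sum_comm]
  refine Finset.sum_congr rfl fun i _ => ?_
  rw [det_apply']
  refine Finset.sum_congr rfl fun σ _ => ?_
  congr 1
  rw [← Finset.mul_prod_erase Finset.univ _ (Finset.mem_univ i)]
  rw [updateCol_apply, if_pos rfl, mul_comm]
  congr 1
  refine Finset.prod_congr rfl fun j hj => ?_
  rw [updateCol_apply, if_neg (Finset.mem_erase.mp hj).1]

private lemma evalDerivDet {m : ℕ} (M N : Matrix (Fin m) (Fin m) ℂ) (β₀ : ℂ)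
    (χ : ℂ[X]) (hχ : ∀ β : ℂ, χ.eval β = (M - β • N).det) :
    (derivative χ).eval β₀ = - trace (adjugate (M - β₀ • N) * N) := by
  classical
  set P : Matrix (Fin m) (Fin m) ℂ[X] := M.map C - (X : ℂ[X]) • N.map C with hPdef
  have hmap : ∀ β : ℂ, P.map (eval β) = M - β • N := by
    intro β
    ext i j
    simp only [hPdef, Matrix.map_apply, Matrix.sub_apply, Matrix.smul_apply, Polynomial.eval_sub,
      Polynomial.eval_mul, Polynomial.eval_C, Polynomial.eval_X, map_sub, smul_eq_mul,
      Matrix.smul_apply]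
  have hχP : χ = P.det := by
    refine Polynomial.funext fun β => ?_
    have h1 := RingHom.map_det (evalRingHom β) P
    simp only [RingHom.mapMatrix_apply, coe_evalRingHom] at h1
    rw [hχ, h1, hmap]
  have hQ : ∀ i : Fin m, ((P.updateCol i fun r => derivative (P r i)).map (eval β₀))
      = (M - β₀ • N).updateCol i ((-1 : ℂ) • fun r => N r i) := by
    intro i
    ext r c
    by_cases hc : c = i
    · subst hc
      simp [hPdef, Matrix.map_apply, updateCol_apply]
    · simp only [hPdef, Matrix.map_apply, updateCol_apply, if_neg hc, Matrix.sub_apply,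
        Matrix.smul_apply, map_sub, eval_sub, eval_mul, eval_C, eval_X, smul_eq_mul,
        Pi.smul_apply]
  have key : ∀ i : Fin m,
      eval β₀ ((P.updateCol i fun r => derivative (P r i)).det)
        = -((adjugate (M - β₀ • N) *ᵥ fun r => N r i) i) := by
    intro i
    have h1 := RingHom.map_det (evalRingHom β₀) (P.updateCol i fun r => derivative (P r i))
    simp only [RingHom.mapMatrix_apply, coe_evalRingHom] at h1
    rw [h1, hQ i, det_updateCol_smul, ← cramer_apply, cramer_eq_adjugate_mulVec]
    ring
  rw [hχP, derivDet, eval_finset_sum]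
  simp only [key]
  have htr2 : ((M - β₀ • N).adjugate * N).trace
      = ∑ i, ((M - β₀ • N).adjugate *ᵥ fun r => N r i) i := by
    simp [trace, diag, mul_apply, mulVec, dotProduct]
  rw [htr2, ← Finset.sum_neg_distrib]

/-- If `β₀` is a simple root of `χ(β) = det(M − βN)`, `x ≠ 0` is
a right eigenvector and `y ≠ 0` a left eigenvector of the pencil at `β₀`, then
`yᵀNx ≠ 0`. -/
theorem left_right_eigvec_pairing_ne_zero_of_simple_root
    (n : ℕ) (M N : Matrix (Fin n) (Fin n) ℂ)
    (χ : Polynomial ℂ) (hχ : ∀ β : ℂ, χ.eval β = (M - β • N).det)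
    (β₀ : ℂ) (hroot : χ.eval β₀ = 0)
    (hsimple : (derivative χ).eval β₀ ≠ 0)
    (x : Fin n → ℂ) (hx : x ≠ 0) (hMx : (M - β₀ • N).mulVec x = 0)
    (y : Fin n → ℂ) (hy : y ≠ 0) (hyM : Matrix.vecMul y (M - β₀ • N) = 0) :
    y ⬝ᵥ N.mulVec x ≠ 0 := by
  classical
  set A := M - β₀ • N with hAdef
  set B := adjugate A with hBdef
  have hdetA : A.det = 0 := by
    have := hχ β₀; rw [hroot] at this; exact this.symm
  have htr : trace (B * N) ≠ 0 := by
    intro h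
    exact hsimple (by rw [evalDerivDet M N β₀ χ hχ, ← hAdef, ← hBdef, h, neg_zero])
  obtain ⟨k, l, hkl⟩ : ∃ k l, B k l ≠ 0 := by
    by_contra h
    push_neg at h
    exact htr (by rw [show B = 0 from by ext i j; exact h i j, zero_mul, trace_zero])
  have hAB : A * B = 0 := by rw [hBdef, mul_adjugate, hdetA, zero_smul]
  have hBA : B * A = 0 := by rw [hBdef, adjugate_mul, hdetA, zero_smul]
  -- right kernel
  set Ck := A.updateRow l (Pi.single k 1) with hCkdef
  have hdetCk : Ck.det = B k l := (adjugate_apply A k l).symm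
  have hCkinv : Ck⁻¹ * Ck = 1 := nonsing_inv_mul _ (by rw [hdetCk]; exact hkl.isUnit)
  set z := Ck⁻¹ *ᵥ Pi.single l 1 with hzdef
  have hker : ∀ v : Fin n → ℂ, A *ᵥ v = 0 → v = v k • z := by
    intro v hv
    have h1 : Ck *ᵥ v = v k • (Pi.single l 1 : Fin n → ℂ) := by
      ext i
      by_cases hi : i = l
      · subst hi
        simp [hCkdef, mulVec, dotProduct, updateRow_apply, Pi.single_apply]
      · have h0 := congrFun hv i
        simp only [Pi.zero_apply] at h0
        simp only [hCkdef, mulVec, dotProduct, updateRow_apply, if_neg hi]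
        rw [show ∑ j, A i j * v j = 0 from h0]
        simp [Pi.single_apply, Ne.symm hi, hi]
    calc v = Ck⁻¹ *ᵥ (Ck *ᵥ v) := by rw [mulVec_mulVec, hCkinv, one_mulVec]
      _ = v k • z := by rw [h1, mulVec_smul]
  -- left kernel
  set Dl := A.updateCol k (Pi.single l 1) with hDldef
  have hdetDl : Dl.det = B k l := by
    rw [hDldef, ← det_transpose, ← updateRow_transpose, ← adjugate_apply, ← adjugate_transpose,
      transpose_apply]
  have hDlinv : Dl * Dl⁻¹ = 1 := mul_nonsing_inv _ (by rw [hdetDl]; exact hkl.isUnit)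
  set z' := Pi.single k 1 ᵥ* Dl⁻¹ with hz'def
  have hker' : ∀ w : Fin n → ℂ, w ᵥ* A = 0 → w = w l • z' := by
    intro w hw
    have h1 : w ᵥ* Dl = w l • (Pi.single k 1 : Fin n → ℂ) := by
      ext j
      by_cases hj : j = k
      · subst hj
        simp [hDldef, vecMul, dotProduct, updateCol_apply, Pi.single_apply]
      · have h0 := congrFun hw j
        simp only [Pi.zero_apply] at h0
        simp only [hDldef, vecMul, dotProduct, updateCol_apply, if_neg hj]
        rw [show ∑ i, w i * A i j = 0 from h0]
        simp [Pi.single_apply, Ne.symm hj, hj]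
    calc w = (w ᵥ* Dl) ᵥ* Dl⁻¹ := by rw [vecMul_vecMul, hDlinv, vecMul_one]
      _ = w l • z' := by rw [h1, smul_vecMul]
  have hxz : x = x k • z := hker x hMx
  have hyz : y = y l • z' := hker' y hyM
  have hxk : x k ≠ 0 := fun h => hx (by rw [hxz, h, zero_smul])
  have hyl : y l ≠ 0 := fun h => hy (by rw [hyz, h, zero_smul])
  -- rank one structure of B
  have hcol : ∀ j i, B i j = B k j * z i := by
    intro j
    have hv : A *ᵥ (fun i => B i j) = 0 := by
      ext i
      have := congrFun (congrFun hAB i) j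
      simpa [mulVec, dotProduct, mul_apply] using this
    intro i
    have := congrFun (hker _ hv) i
    simpa using this
  have hrow : ∀ j, B k j = B k l * z' j := by
    have hw : (fun j => B k j) ᵥ* A = 0 := by
      ext j
      have := congrFun (congrFun hBA k) j
      simpa [vecMul, dotProduct, mul_apply] using this
    intro j
    have := congrFun (hker' _ hw) j
    simpa using this
  have htrace_eq : trace (B * N) = B k l * (z' ⬝ᵥ N *ᵥ z) := by
    simp only [trace, diag, mul_apply, dotProduct, mulVec, Finset.mul_sum]
    rw [Finset.sum_comm]
    refine Finset.sum_congr rfl fun j _ => ?_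
    refine Finset.sum_congr rfl fun i _ => ?_
    rw [hcol j i, hrow j]
    ring
  have hzz : z' ⬝ᵥ N *ᵥ z ≠ 0 := by
    intro h
    exact htr (by rw [htrace_eq, h, mul_zero])
  rw [hyz, hxz, mulVec_smul, smul_dotProduct, dotProduct_smul, smul_eq_mul, smul_eq_mul]
  exact mul_ne_zero hyl (mul_ne_zero hxk hzz)
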